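/- Let (V,q) be a nondegenerate quadratic space and τ an isometry. The Wall form ω_τ is antisymmetric (i.e., ω_τ(u,v) = -ω_τ(v,u) for all u,v) if and only if (τ - id)² = 0. -/

import Mathlib

theorem wall_stmt6 {F V : Type*} [Field F] [AddCommGroup V] [Module F V]
    [FiniteDimensional F V] (q : QuadraticForm F V)
    (hq : LinearMap.BilinForm.Nondegenerate (QuadraticMap.polarBilin q))
    (τ : V →ₗ[F] V) (hτ : ∀ x, q (τ x) = q x) :
    (∀ x y : V, QuadraticMap.polarBilin q (τ x - x) y =
        - QuadraticMap.polarBilin q (τ y - y) x) ↔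
      (τ - LinearMap.id) ∘ₗ (τ - LinearMap.id) = 0 := by
  set b := QuadraticMap.polarBilin q with hb
  have hsym : ∀ x y : V, b x y = b y x := fun x y => QuadraticMap.polar_comm q x y
  have hinv : ∀ x y : V, b (τ x) (τ y) = b x y := by
    intro x y
    simp only [hb, QuadraticMap.polarBilin_apply_apply, QuadraticMap.polar, ← map_add, hτ]
  constructor
  · intro h
    have hzero : ∀ x y : V, b (τ x - x) (τ y - y) = 0 := by
      intro x y
      have h1 := h x y
      simp only [map_sub, LinearMap.sub_apply] at *
      linear_combination hinv x y - h1 - hsym x (τ y) + hsym x y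
    -- τ injective
    have hinj : Function.Injective τ := by
      rw [← LinearMap.ker_eq_bot, LinearMap.ker_eq_bot']
      intro m hm
      apply hq.1
      intro n
      have := hinv m n
      rw [hm] at this
      simpa using this.symm
    have hsurj : Function.Surjective τ := LinearMap.surjective_of_injective hinj
    ext v
    simp only [LinearMap.comp_apply, LinearMap.sub_apply, LinearMap.id_apply,
      LinearMap.zero_apply]
    apply hq.1
    intro n
    obtain ⟨w, rfl⟩ := hsurj n
    rw [hsym]
    have h2 := hzero w v
    simp only [map_sub, LinearMap.sub_apply] at *
    linear_combination hinv w (τ v) - hinv w v - h2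
  · intro h x y
    have hcomp : ∀ v : V, τ (τ v) = τ v + τ v - v := by
      intro v
      have h0 := LinearMap.ext_iff.mp h v
      simp only [LinearMap.comp_apply, LinearMap.sub_apply, LinearMap.id_apply,
        LinearMap.zero_apply, map_sub] at h0
      rw [← sub_eq_zero, ← h0]
      abel
    have h3 := hinv x (τ y)
    rw [hcomp y] at h3
    simp only [map_sub, map_add, LinearMap.sub_apply, LinearMap.add_apply] at *
    linear_combination -h3 + 2 * hinv x y - hsym x (τ y) - hsym y x
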